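/- The unique complete bracketing of the word x_1 x_2 ... x_{n+1} all of whose 1-bracketing coarsenings enclose the last letter x_{n+1} is the right-to-left bracketing x_1(x_2(...(x_{n-1}(x_n x_{n+1}))...)). That is, for every other complete bracketing, some 1-bracketing obtained by deleting all but one pair of its parentheses does not enclose x_{n+1}. -/
import Mathlib


/-- Two parenthesis pairs, encoded as intervals `(a, b)` of letter positions,
are compatible if they are disjoint or nested. -/
def Compat (p q : ℕ × ℕ) : Prop :=
  p.2 < q.1 ∨ q.2 < p.1 ∨ (p.1 ≤ q.1 ∧ q.2 ≤ p.2) ∨ (q.1 ≤ p.1 ∧ p.2 ≤ q.2)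

/-- A (possibly partial) bracketing of a word with `n` letters: a set of
parenthesis pairs, each encoded as an interval `(a, b)` with `1 ≤ a < b ≤ n`
enclosing the consecutive block `x_a ... x_b` (so of length at least `2`), the
trivial pair `(1, n)` enclosing the whole word being excluded, such that any two
pairs are nested or disjoint. -/
def IsBracketing (n : ℕ) (S : Finset (ℕ × ℕ)) : Prop :=
  (∀ p ∈ S, 1 ≤ p.1 ∧ p.1 < p.2 ∧ p.2 ≤ n ∧ ¬(p.1 = 1 ∧ p.2 = n)) ∧
  ∀ p ∈ S, ∀ q ∈ S, Compat p q

/-- The bracketings of a word with `n` letters. -/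
def Bracketing (n : ℕ) : Type := {S : Finset (ℕ × ℕ) // IsBracketing n S}


/-- The unique complete bracketing of `x_1 ... x_{n+1}` all of whose one-bracketing
coarsenings enclose the last letter `x_{n+1}` (i.e. every parenthesis pair of which
encloses `x_{n+1}`) is the right-to-left bracketing
`x_1(x_2(...(x_{n-1}(x_n x_{n+1}))...))`, whose pairs are `(k, n+1)` for `2 ≤ k ≤ n`. -/
theorem rightComb_unique (n : ℕ) (hn : 1 ≤ n) (B : Bracketing (n + 1))
    (hB : B.val.card = n - 1) :
    (∀ p ∈ B.val, p.2 = n + 1) ↔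
      B.val = (Finset.Icc 2 n).image (fun k => (k, n + 1)) := by
  constructor
  · intro h
    apply Finset.eq_of_subset_of_card_le
    · intro p hp
      obtain ⟨h1, h2, h3, h4⟩ := B.property.1 p hp
      have hp2 := h p hp
      simp only [Finset.mem_image, Finset.mem_Icc]
      refine ⟨p.1, ⟨?_, ?_⟩, ?_⟩
      · rcases Nat.lt_or_ge p.1 2 with h' | h'
        · interval_cases h1' : p.1
          · exact absurd ⟨rfl, hp2⟩ h4
        · exact h'
      · omega
      · rw [← hp2]
    · rw [hB, Finset.card_image_of_injective _ (by intro a b hab; simpa using hab),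
        Nat.card_Icc]
      omega
  · intro h p hp
    rw [h] at hp
    simp only [Finset.mem_image] at hp
    obtain ⟨k, _, rfl⟩ := hp
    rfl
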